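/- Let k ≥ 2, let n be a multiple of k, and let α ∈ (0, 1/(100k²)) be such that αn is a positive integer. Define M ∈ {0,1}^{kαn×n} by: for i ∈ [αn] and j ∈ [k], row k(i−1)+j has its unique 1 in column (j−1)·(n/k) + i, and all other entries are 0. Fix nonnegative integers ℓ_1,…,ℓ_k with ℓ := Σ_{j=1}^k ℓ_j satisfying 1 ≤ ℓ ≤ kαn. Let V be the set of vectors v ∈ {0,1}^n having, for each j ∈ [k], exactly ℓ_j ones among the coordinates {(j−1)n/k + 1, …, j·n/k}, and let U = {v ∈ V : there exists s ∈ {0,1}^{kαn} with s ≠ 0, Mᵀs = v, and such that for every i ∈ [αn] the block (s_{k(i−1)+1},…,s_{ki}) has Hamming weight different from 1}. Then |U| ≤ ((ℓ/n)·e³·α·k⁵)^{ℓ/2} · |V|. -/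

import Mathlib

open scoped Classical

/-- The fixed partial permutation matrix `M ∈ {0,1}^{kαn×n}` (with `n = k·c`, `αn = a`):
row `k(i−1)+j` (1-based) has its unique 1 in column `(j−1)·(n/k) + i`. In 0-based terms,
row `r` has its 1 in column `(r mod k)·c + (r div k)`. -/
def Mrow (k c a : ℕ) (r : Fin (k * a)) (j : Fin (k * c)) : ℕ :=
  if j.val = (r.val % k) * c + r.val / k then 1 else 0

/-- The set `V` of `(ℓ₁,…,ℓ_k)`-vectors: for each `j ∈ [k]`, exactly `ℓ_j` ones among the
`j`-th block of `n/k = c` coordinates. -/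
noncomputable def Vset (k c : ℕ) (ℓv : Fin k → ℕ) : Finset (Fin (k * c) → Bool) :=
  Finset.univ.filter fun v => ∀ j : Fin k,
    (Finset.univ.filter fun x : Fin (k * c) => x.val / c = j.val ∧ v x = true).card = ℓv j

/-- The subset `U ⊆ V` of vectors of the form `Mᵀs` for some `s ≠ 0` all of whose
`k`-blocks have Hamming weight different from 1. -/
noncomputable def Uset (k c a : ℕ) (ℓv : Fin k → ℕ) : Finset (Fin (k * c) → Bool) :=
  (Vset k c ℓv).filter fun v => ∃ s : Fin (k * a) → Bool,
    (∃ r, s r = true) ∧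
    (∀ i : Fin a,
      (Finset.univ.filter fun r : Fin (k * a) => r.val / k = i.val ∧ s r = true).card ≠ 1) ∧
    (∀ j : Fin (k * c),
      (∑ r : Fin (k * a), Mrow k c a r j * (if s r then 1 else 0)) =
        (if v j then 1 else 0))


open Finset

section Infra
variable {k c a : ℕ}

/-- row index from block `i` and color `j`. -/
def rF (i : Fin a) (j : Fin k) : Fin (k * a) :=
  ⟨i.val * k + j.val, by
    have hi := i.isLt; have hj := j.isLt
    calc i.val * k + j.val < i.val * k + k := by omega
      _ = (i.val + 1) * k := by ring
      _ ≤ a * k := Nat.mul_le_mul_right k hi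
      _ = k * a := Nat.mul_comm a k⟩

lemma rF_mod (i : Fin a) (j : Fin k) : (rF i j : Fin (k*a)).val % k = j.val := by
  show (i.val * k + j.val) % k = j.val
  rw [add_comm, Nat.add_mul_mod_self_right, Nat.mod_eq_of_lt j.isLt]

lemma rF_div (hk : 0 < k) (i : Fin a) (j : Fin k) : (rF i j : Fin (k*a)).val / k = i.val := by
  show (i.val * k + j.val) / k = i.val
  rw [add_comm, Nat.add_mul_div_right _ _ hk, Nat.div_eq_of_lt j.isLt, zero_add]

lemma rF_surj (hk : 0 < k) (r : Fin (k * a)) :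
    r = rF ⟨r.val / k, Nat.div_lt_of_lt_mul r.isLt⟩
          ⟨r.val % k, Nat.mod_lt _ hk⟩ := by
  apply Fin.ext
  show r.val = r.val / k * k + r.val % k
  exact (Nat.div_add_mod' r.val k).symm

/-- column index from color `j` and block `i`. -/
def colIdx (hac : a ≤ c) (j : Fin k) (i : Fin a) : Fin (k * c) :=
  ⟨j.val * c + i.val, by
    have hi := i.isLt; have hj := j.isLt
    calc j.val * c + i.val < j.val * c + c := by omega
      _ = (j.val + 1) * c := by ring
      _ ≤ k * c := Nat.mul_le_mul_right c hj⟩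

lemma colIdx_div (hac : a ≤ c) (j : Fin k) (i : Fin a) :
    (colIdx hac j i).val / c = j.val := by
  show (j.val * c + i.val) / c = j.val
  have hc : 0 < c := lt_of_lt_of_le i.pos hac
  rw [add_comm, Nat.add_mul_div_right _ _ hc, Nat.div_eq_of_lt (lt_of_lt_of_le i.isLt hac),
    zero_add]

lemma colIdx_mod (hac : a ≤ c) (j : Fin k) (i : Fin a) :
    (colIdx hac j i).val % c = i.val := by
  show (j.val * c + i.val) % c = i.val
  rw [add_comm, Nat.add_mul_mod_self_right, Nat.mod_eq_of_lt (lt_of_lt_of_le i.isLt hac)]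

/-- the column hit by row `r` equals `colIdx`. -/
lemma Mrow_col (hk : 0 < k) (hac : a ≤ c) (i : Fin a) (j : Fin k) (x : Fin (k * c)) :
    x.val = (rF i j : Fin (k*a)).val % k * c + (rF i j : Fin (k*a)).val / k ↔
      x = colIdx hac j i := by
  rw [rF_mod, rF_div hk, Fin.ext_iff]; rfl

end Infra

section Decode
variable {k c a : ℕ}

lemma colIdx_inj (hk : 0 < k) (hac : a ≤ c) {j j' : Fin k} {i i' : Fin a}
    (h : (colIdx hac j i).val = (colIdx hac j' i').val) : j = j' ∧ i = i' := by
  have h1 := colIdx_div hac j i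
  have h2 := colIdx_div hac j' i'
  have h3 := colIdx_mod hac j i
  have h4 := colIdx_mod hac j' i'
  rw [h] at h1 h3
  constructor
  · exact Fin.ext (h1.symm.trans h2)
  · exact Fin.ext (h3.symm.trans h4)

lemma sum_Mrow_col (hk : 0 < k) (hac : a ≤ c) (s : Fin (k * a) → Bool) (i : Fin a) (j : Fin k) :
    (∑ r : Fin (k * a), Mrow k c a r (colIdx hac j i) * (if s r then 1 else 0)) =
      (if s (rF i j) then 1 else 0) := by
  rw [Finset.sum_eq_single (rF i j)]
  · have : Mrow k c a (rF i j) (colIdx hac j i) = 1 := by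
      unfold Mrow
      rw [if_pos]
      rw [rF_mod, rF_div hk]; rfl
    rw [this, one_mul]
  · intro r _ hr
    have : Mrow k c a r (colIdx hac j i) = 0 := by
      unfold Mrow
      rw [if_neg]
      intro hEq
      have hdlt : r.val / k < a := Nat.div_lt_of_lt_mul r.isLt
      have hmlt : r.val % k < k := Nat.mod_lt _ hk
      have hEq2 : (colIdx hac j i).val = (colIdx hac ⟨r.val % k, hmlt⟩ ⟨r.val / k, hdlt⟩).val := hEq
      obtain ⟨hj, hi⟩ := colIdx_inj hk hac hEq2
      apply hr
      rw [rF_surj hk r]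
      rw [← hi, ← hj]
    rw [this, zero_mul]
  · intro h; exact absurd (Finset.mem_univ _) h

lemma sum_Mrow_offrange (hk : 0 < k) (hac : a ≤ c) (s : Fin (k * a) → Bool) (x : Fin (k * c))
    (hx : a ≤ x.val % c) :
    (∑ r : Fin (k * a), Mrow k c a r x * (if s r then 1 else 0)) = 0 := by
  apply Finset.sum_eq_zero
  intro r _
  have : Mrow k c a r x = 0 := by
    unfold Mrow
    rw [if_neg]
    intro hEq
    have hdlt : r.val / k < a := Nat.div_lt_of_lt_mul r.isLt
    have hmlt : r.val % k < k := Nat.mod_lt _ hk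
    have : x.val % c = r.val / k := by
      rw [hEq]
      exact colIdx_mod hac ⟨r.val % k, hmlt⟩ ⟨r.val / k, hdlt⟩
    omega
  rw [this, zero_mul]

/-- the witness `s` is determined: `v` on the range of the column map is `s`. -/
lemma witness_eq (hk : 0 < k) (hac : a ≤ c) {v : Fin (k * c) → Bool} {s : Fin (k * a) → Bool}
    (hsum : ∀ x : Fin (k * c),
      (∑ r : Fin (k * a), Mrow k c a r x * (if s r then 1 else 0)) = (if v x then 1 else 0))
    (i : Fin a) (j : Fin k) : v (colIdx hac j i) = s (rF i j) := by
  have h := hsum (colIdx hac j i)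
  rw [sum_Mrow_col hk hac] at h
  cases hs : s (rF i j) <;> cases hv : v (colIdx hac j i) <;> rw [hs, hv] at h <;> simp_all

lemma witness_offrange (hk : 0 < k) (hac : a ≤ c) {v : Fin (k * c) → Bool}
    {s : Fin (k * a) → Bool}
    (hsum : ∀ x : Fin (k * c),
      (∑ r : Fin (k * a), Mrow k c a r x * (if s r then 1 else 0)) = (if v x then 1 else 0))
    (x : Fin (k * c)) (hx : a ≤ x.val % c) : v x = false := by
  have h := hsum x
  rw [sum_Mrow_offrange hk hac _ _ hx] at h
  cases hv : v x <;> rw [hv] at h <;> simp_all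

end Decode

section Counting
variable {k c a : ℕ}

/-- ones of `v` in block `j`, viewed inside `Fin a`. -/
noncomputable def AsetV (hac : a ≤ c) (v : Fin (k * c) → Bool) (j : Fin k) : Finset (Fin a) :=
  Finset.univ.filter fun i => v (colIdx hac j i) = true

/-- nonzero blocks of the (decoded) witness. -/
noncomputable def TsetV (hac : a ≤ c) (v : Fin (k * c) → Bool) : Finset (Fin a) :=
  Finset.univ.filter fun i => ∃ j : Fin k, v (colIdx hac j i) = true

lemma AsetV_subset_TsetV (hac : a ≤ c) (v : Fin (k * c) → Bool) (j : Fin k) :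
    AsetV hac v j ⊆ TsetV hac v := by
  intro i hi
  rw [AsetV, Finset.mem_filter] at hi
  rw [TsetV, Finset.mem_filter]
  exact ⟨Finset.mem_univ _, j, hi.2⟩

lemma AsetV_card (hk : 0 < k) (hac : a ≤ c) {ℓv : Fin k → ℕ} {v : Fin (k * c) → Bool}
    (hv : ∀ j : Fin k,
      (Finset.univ.filter fun x : Fin (k * c) => x.val / c = j.val ∧ v x = true).card = ℓv j)
    (hoff : ∀ x : Fin (k * c), a ≤ x.val % c → v x = false) (j : Fin k) :
    (AsetV hac v j).card = ℓv j := by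
  rw [← hv j]
  apply Finset.card_nbij (fun i => colIdx hac j i)
  · intro i hi
    rw [AsetV, Finset.mem_coe, Finset.mem_filter] at hi
    rw [Finset.mem_coe, Finset.mem_filter]
    exact ⟨Finset.mem_univ _, colIdx_div hac j i, hi.2⟩
  · intro i _ i' _ h
    exact (colIdx_inj hk hac (congrArg Fin.val h)).2
  · intro x hx
    simp only [Finset.coe_filter, Set.mem_setOf_eq] at hx
    obtain ⟨-, hdiv, hvx⟩ := hx
    have hmlt : x.val % c < a := by
      by_contra h
      rw [hoff x (le_of_not_gt h)] at hvx
      exact Bool.false_ne_true hvx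
    refine ⟨⟨x.val % c, hmlt⟩, ?_, ?_⟩
    · have hx_eq : colIdx hac j ⟨x.val % c, hmlt⟩ = x := by
        apply Fin.ext
        show j.val * c + x.val % c = x.val
        rw [← hdiv]
        exact Nat.div_add_mod' x.val c
      simp only [Finset.coe_filter, Set.mem_setOf_eq, AsetV]
      constructor
      · exact Finset.mem_univ _
      · rw [hx_eq]; exact hvx
    · apply Fin.ext
      show j.val * c + x.val % c = x.val
      rw [← hdiv]
      exact Nat.div_add_mod' x.val c

/-- block weight of the witness. -/
noncomputable def wcount (s : Fin (k * a) → Bool) (i : Fin a) : ℕ :=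
  (Finset.univ.filter fun r : Fin (k * a) => r.val / k = i.val ∧ s r = true).card

lemma card_strue_div (hk : 0 < k) (s : Fin (k * a) → Bool) :
    (Finset.univ.filter fun r : Fin (k * a) => s r = true).card = ∑ i : Fin a, wcount s i := by
  rw [Finset.card_eq_sum_card_fiberwise
    (f := fun r : Fin (k * a) => (⟨r.val / k, Nat.div_lt_of_lt_mul r.isLt⟩ : Fin a))
    (t := Finset.univ) (fun x _ => Finset.mem_univ _)]
  apply Finset.sum_congr rfl
  intro i _
  rw [wcount]
  congr 1
  ext r
  simp only [Finset.mem_filter, Finset.mem_univ, true_and, Fin.ext_iff]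
  tauto

lemma card_strue_mod (hk : 0 < k) (s : Fin (k * a) → Bool) :
    (Finset.univ.filter fun r : Fin (k * a) => s r = true).card =
      ∑ j : Fin k, (Finset.univ.filter fun r : Fin (k * a) =>
        r.val % k = j.val ∧ s r = true).card := by
  rw [Finset.card_eq_sum_card_fiberwise
    (f := fun r : Fin (k * a) => (⟨r.val % k, Nat.mod_lt _ hk⟩ : Fin k))
    (t := Finset.univ) (fun x _ => Finset.mem_univ _)]
  apply Finset.sum_congr rfl
  intro j _
  congr 1
  ext r
  simp only [Finset.mem_filter, Finset.mem_univ, true_and, Fin.ext_iff]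
  tauto

lemma modfiber_card (hk : 0 < k) (hac : a ≤ c) {v : Fin (k * c) → Bool}
    {s : Fin (k * a) → Bool} (hw : ∀ (i : Fin a) (j : Fin k), v (colIdx hac j i) = s (rF i j))
    (j : Fin k) :
    (Finset.univ.filter fun r : Fin (k * a) => r.val % k = j.val ∧ s r = true).card =
      (AsetV hac v j).card := by
  symm
  apply Finset.card_nbij (fun i => rF i j)
  · intro i hi
    rw [AsetV, Finset.mem_coe, Finset.mem_filter] at hi
    rw [Finset.mem_coe, Finset.mem_filter]
    refine ⟨Finset.mem_univ _, rF_mod i j, ?_⟩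
    rw [← hw i j]; exact hi.2
  · intro i _ i' _ h
    have : i.val * k + j.val = i'.val * k + j.val := congrArg Fin.val h
    have : i.val * k = i'.val * k := by omega
    exact Fin.ext (Nat.eq_of_mul_eq_mul_right hk this)
  · intro r hr
    simp only [Finset.coe_filter, Set.mem_setOf_eq] at hr
    obtain ⟨-, hmod, hs⟩ := hr
    have hdlt : r.val / k < a := Nat.div_lt_of_lt_mul r.isLt
    have hrF : rF ⟨r.val / k, hdlt⟩ j = r := by
      apply Fin.ext
      show r.val / k * k + j.val = r.val
      rw [← hmod]
      exact Nat.div_add_mod' r.val k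
    refine ⟨⟨r.val / k, hdlt⟩, ?_, hrF⟩
    simp only [Finset.coe_filter, Set.mem_setOf_eq, AsetV]
    refine ⟨Finset.mem_univ _, ?_⟩
    rw [hw, hrF]
    exact hs

lemma mem_TsetV_iff (hk : 0 < k) (hac : a ≤ c) {v : Fin (k * c) → Bool}
    {s : Fin (k * a) → Bool} (hw : ∀ (i : Fin a) (j : Fin k), v (colIdx hac j i) = s (rF i j))
    (i : Fin a) : i ∈ TsetV hac v ↔ 0 < wcount s i := by
  rw [TsetV, Finset.mem_filter]
  constructor
  · rintro ⟨-, j, hj⟩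
    rw [wcount, Finset.card_pos]
    refine ⟨rF i j, ?_⟩
    rw [Finset.mem_filter]
    refine ⟨Finset.mem_univ _, rF_div hk i j, ?_⟩
    rw [← hw]; exact hj
  · intro h
    rw [wcount, Finset.card_pos] at h
    obtain ⟨r, hr⟩ := h
    rw [Finset.mem_filter] at hr
    obtain ⟨-, hdiv, hs⟩ := hr
    have hmlt : r.val % k < k := Nat.mod_lt _ hk
    refine ⟨Finset.mem_univ _, ⟨r.val % k, hmlt⟩, ?_⟩
    have : rF i ⟨r.val % k, hmlt⟩ = r := by
      apply Fin.ext
      show i.val * k + r.val % k = r.val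
      rw [← hdiv]
      exact Nat.div_add_mod' r.val k
    rw [hw, this]
    exact hs

end Counting

section Injection
variable {k c a : ℕ}

lemma AsetV_determines (hc : 0 < c) (hac : a ≤ c) {v v' : Fin (k * c) → Bool}
    (hoff : ∀ x : Fin (k * c), a ≤ x.val % c → v x = false)
    (hoff' : ∀ x : Fin (k * c), a ≤ x.val % c → v' x = false)
    (h : ∀ j : Fin k, AsetV hac v j = AsetV hac v' j) : v = v' := by
  funext x
  by_cases hx : x.val % c < a
  · have hklt : x.val / c < k := Nat.div_lt_of_lt_mul (x.isLt.trans_eq (Nat.mul_comm k c))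
    set j : Fin k := ⟨x.val / c, hklt⟩ with hj
    set i : Fin a := ⟨x.val % c, hx⟩ with hi
    have hxe : colIdx hac j i = x := by
      apply Fin.ext
      exact Nat.div_add_mod' x.val c
    have h1 : i ∈ AsetV hac v j ↔ i ∈ AsetV hac v' j := by rw [h j]
    simp only [AsetV, Finset.mem_filter, Finset.mem_univ, true_and, hxe] at h1
    cases hv : v x <;> cases hv' : v' x <;> simp_all
  · rw [hoff x (le_of_not_gt hx), hoff' x (le_of_not_gt hx)]

lemma Uset_card_le_sum (hk2 : 2 ≤ k) (hc : 0 < c) (ha : 0 < a) (hac : a ≤ c)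
    (ℓv : Fin k → ℕ) :
    (Uset k c a ℓv).card ≤
      ∑ t ∈ Finset.Icc 1 (min a ((∑ j, ℓv j) / 2)),
        a.choose t * ∏ j, t.choose (ℓv j) := by
  have hk : 0 < k := by omega
  set L := ∑ j, ℓv j with hL
  set m := min a (L / 2) with hm
  set B := (Finset.Icc 1 m).sigma (fun _ : ℕ =>
    ((Finset.univ : Finset (Fin a)).powersetCard _).sigma (fun T : Finset (Fin a) =>
      Fintype.piFinset (fun j : Fin k => T.powersetCard (ℓv j)))) with hB
  have hcard : B.card = ∑ t ∈ Finset.Icc 1 m, a.choose t * ∏ j, t.choose (ℓv j) := by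
    rw [hB, Finset.card_sigma]
    apply Finset.sum_congr rfl
    intro t _
    rw [Finset.card_sigma]
    rw [Finset.sum_congr rfl (fun T hT => ?_), Finset.sum_const, Finset.card_powersetCard,
      Finset.card_univ, Fintype.card_fin, smul_eq_mul]
    rw [Fintype.card_piFinset]
    apply Finset.prod_congr rfl
    intro j _
    rw [Finset.card_powersetCard, (Finset.mem_powersetCard.mp hT).2]
  rw [← hcard]
  apply Finset.card_le_card_of_injOn
    (fun v => (⟨(TsetV hac v).card, TsetV hac v, fun j => AsetV hac v j⟩ :
      Σ _ : ℕ, Σ _ : Finset (Fin a), Fin k → Finset (Fin a)))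
  · -- membership
    intro v hv
    rw [Uset, Finset.mem_coe, Finset.mem_filter] at hv
    obtain ⟨hvV, s, hne, hblk, hsum⟩ := hv
    rw [Vset, Finset.mem_filter] at hvV
    have hcnt := hvV.2
    have hw := witness_eq hk hac hsum
    have hoff := witness_offrange hk hac hsum
    have hA : ∀ j, (AsetV hac v j).card = ℓv j := AsetV_card hk hac hcnt hoff
    -- total count identity
    have hLw : L = ∑ i : Fin a, wcount s i := by
      rw [← card_strue_div hk s, card_strue_mod hk s, hL]
      apply Finset.sum_congr rfl
      intro j _
      rw [modfiber_card hk hac hw j, hA j]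
    -- T bounds
    have hw2 : ∀ i ∈ TsetV hac v, 2 ≤ wcount s i := by
      intro i hi
      have h1 := (mem_TsetV_iff hk hac hw i).mp hi
      have h2 := hblk i
      rw [wcount] at h1 ⊢
      omega
    have hTle : 2 * (TsetV hac v).card ≤ L := by
      calc 2 * (TsetV hac v).card = (TsetV hac v).card • 2 := by
            rw [smul_eq_mul, mul_comm]
        _ ≤ ∑ i ∈ TsetV hac v, wcount s i := Finset.card_nsmul_le_sum _ _ _ hw2
        _ ≤ ∑ i : Fin a, wcount s i :=
            Finset.sum_le_sum_of_subset (Finset.subset_univ _)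
        _ = L := hLw.symm
    have hT1 : 1 ≤ (TsetV hac v).card := by
      obtain ⟨r, hr⟩ := hne
      have hdlt : r.val / k < a := Nat.div_lt_of_lt_mul r.isLt
      have : (⟨r.val / k, hdlt⟩ : Fin a) ∈ TsetV hac v := by
        rw [mem_TsetV_iff hk hac hw, wcount, Finset.card_pos]
        exact ⟨r, Finset.mem_filter.mpr ⟨Finset.mem_univ _, rfl, hr⟩⟩
      exact Finset.card_pos.mpr ⟨_, this⟩
    rw [hB]
    refine Finset.mem_sigma.mpr ⟨?_, Finset.mem_sigma.mpr ⟨?_, ?_⟩⟩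
    · show (TsetV hac v).card ∈ Finset.Icc 1 m
      rw [Finset.mem_Icc]
      refine ⟨hT1, le_min (Finset.card_le_card (Finset.subset_univ _) |>.trans
        (by rw [Finset.card_univ, Fintype.card_fin])) ?_⟩
      rw [Nat.le_div_iff_mul_le (by norm_num)]
      omega
    · show TsetV hac v ∈ (Finset.univ : Finset (Fin a)).powersetCard (TsetV hac v).card
      rw [Finset.mem_powersetCard]
      exact ⟨Finset.subset_univ _, rfl⟩
    · show (fun j => AsetV hac v j) ∈ Fintype.piFinset fun j : Fin k =>
        (TsetV hac v).powersetCard (ℓv j)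
      rw [Fintype.mem_piFinset]
      intro j
      rw [Finset.mem_powersetCard]
      exact ⟨AsetV_subset_TsetV hac v j, hA j⟩
  · -- injectivity
    intro v hv v' hv' hF
    simp only [Finset.mem_coe] at hv hv'
    rw [Uset, Finset.mem_filter] at hv hv'
    obtain ⟨-, s, -, -, hsum⟩ := hv
    obtain ⟨-, s', -, -, hsum'⟩ := hv'
    have hAeq : ∀ j, AsetV hac v j = AsetV hac v' j := by
      intro j
      have := congrArg
        (fun x : Σ _ : ℕ, Σ _ : Finset (Fin a), Fin k → Finset (Fin a) => x.snd.snd j) hF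
      exact this
    exact AsetV_determines hc hac (witness_offrange hk hac hsum)
      (witness_offrange hk hac hsum') hAeq

end Injection

section VsetLB
variable {k c : ℕ}

noncomputable def blockFS (k c : ℕ) (j : Fin k) : Finset (Fin (k * c)) :=
  Finset.univ.filter fun x : Fin (k * c) => x.val / c = j.val

lemma blockFS_card (hk : 0 < k) (hc : 0 < c) (j : Fin k) : (blockFS k c j).card = c := by
  have h1 : (Finset.univ : Finset (Fin c)).card = c := by
    rw [Finset.card_univ, Fintype.card_fin]
  have h2 : (Finset.univ : Finset (Fin c)).card = (blockFS k c j).card := by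
    apply Finset.card_nbij (fun i => colIdx (le_refl c) j i)
    · intro i _
      rw [blockFS, Finset.mem_coe, Finset.mem_filter]
      exact ⟨Finset.mem_univ _, colIdx_div (le_refl c) j i⟩
    · intro i _ i' _ h
      exact (colIdx_inj hk (le_refl c) (congrArg Fin.val h)).2
    · intro x hx
      simp only [blockFS, Finset.coe_filter, Set.mem_setOf_eq] at hx
      obtain ⟨-, hdiv⟩ := hx
      refine ⟨⟨x.val % c, Nat.mod_lt _ hc⟩, Finset.mem_coe.mpr (Finset.mem_univ _), ?_⟩
      apply Fin.ext
      show j.val * c + x.val % c = x.val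
      rw [← hdiv]
      exact Nat.div_add_mod' x.val c
  rw [← h2, h1]

lemma prod_choose_le_Vset_card (hk : 0 < k) (hc : 0 < c) (ℓv : Fin k → ℕ) :
    (∏ j, c.choose (ℓv j)) ≤ (Vset k c ℓv).card := by
  have hpic : (Fintype.piFinset fun j : Fin k => (blockFS k c j).powersetCard (ℓv j)).card =
      ∏ j, c.choose (ℓv j) := by
    rw [Fintype.card_piFinset]
    apply Finset.prod_congr rfl
    intro j _
    rw [Finset.card_powersetCard, blockFS_card hk hc]
  rw [← hpic]
  have hklt : ∀ x : Fin (k * c), x.val / c < k :=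
    fun x => Nat.div_lt_of_lt_mul (x.isLt.trans_eq (Nat.mul_comm k c))
  have key : ∀ f : Fin k → Finset (Fin (k * c)),
      f ∈ (Fintype.piFinset fun j : Fin k => (blockFS k c j).powersetCard (ℓv j)) →
      ∀ j : Fin k, (Finset.univ.filter fun x : Fin (k * c) =>
        x.val / c = j.val ∧ decide (x ∈ f ⟨x.val / c, hklt x⟩) = true) = f j := by
    intro f hf j
    have hsub : ∀ j', f j' ⊆ blockFS k c j' := by
      intro j'
      have := Fintype.mem_piFinset.mp hf j'
      exact (Finset.mem_powersetCard.mp this).1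
    ext x
    simp only [Finset.mem_filter, Finset.mem_univ, true_and, decide_eq_true_eq]
    constructor
    · rintro ⟨hdiv, hmem⟩
      have : (⟨x.val / c, hklt x⟩ : Fin k) = j := Fin.ext hdiv
      rwa [this] at hmem
    · intro hmem
      have hdiv : x.val / c = j.val := by
        have := hsub j hmem
        rw [blockFS, Finset.mem_filter] at this
        exact this.2
      refine ⟨hdiv, ?_⟩
      have : (⟨x.val / c, hklt x⟩ : Fin k) = j := Fin.ext hdiv
      rw [this]
      exact hmem
  apply Finset.card_le_card_of_injOn
    (fun f => fun x : Fin (k * c) => decide (x ∈ f ⟨x.val / c, hklt x⟩))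
  · intro f hf
    rw [Vset, Finset.mem_coe, Finset.mem_filter]
    refine ⟨Finset.mem_univ _, ?_⟩
    intro j
    rw [key f hf j]
    exact (Finset.mem_powersetCard.mp (Fintype.mem_piFinset.mp hf j)).2
  · intro f hf f' hf' hG
    funext j
    rw [← key f hf j, ← key f' hf' j]
    congr 1
    funext x
    have := congrFun hG x
    simp only at this
    rw [this]

end VsetLB

section Analytic

lemma dF_ratio {t c : ℕ} (h : t ≤ c) (l : ℕ) :
    t.descFactorial l * c ^ l ≤ c.descFactorial l * t ^ l := by
  induction l with
  | zero => simp
  | succ l IH =>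
    have key : (t - l) * c ≤ (c - l) * t := by
      have h1 : l * t ≤ l * c := Nat.mul_le_mul_left l h
      calc (t - l) * c = t * c - l * c := Nat.sub_mul t l c
        _ ≤ t * c - l * t := Nat.sub_le_sub_left h1 (t * c)
        _ = c * t - l * t := by rw [Nat.mul_comm t c]
        _ = (c - l) * t := (Nat.sub_mul c l t).symm
    calc t.descFactorial (l + 1) * c ^ (l + 1)
        = ((t - l) * c) * (t.descFactorial l * c ^ l) := by
          rw [Nat.descFactorial_succ, pow_succ]; ring
      _ ≤ ((c - l) * t) * (c.descFactorial l * t ^ l) := Nat.mul_le_mul key IH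
      _ = c.descFactorial (l + 1) * t ^ (l + 1) := by
          rw [Nat.descFactorial_succ, pow_succ]; ring

lemma choose_ratio {t c : ℕ} (h : t ≤ c) (l : ℕ) :
    t.choose l * c ^ l ≤ c.choose l * t ^ l := by
  have h1 := dF_ratio h l
  rw [Nat.descFactorial_eq_factorial_mul_choose, Nat.descFactorial_eq_factorial_mul_choose]
    at h1
  have h2 : l.factorial * (t.choose l * c ^ l) ≤ l.factorial * (c.choose l * t ^ l) := by
    calc l.factorial * (t.choose l * c ^ l) = l.factorial * t.choose l * c ^ l := by ring
      _ ≤ l.factorial * c.choose l * t ^ l := h1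
      _ = l.factorial * (c.choose l * t ^ l) := by ring
  exact Nat.le_of_mul_le_mul_left h2 l.factorial_pos

lemma pow_le_exp_mul_factorial (t : ℕ) :
    (t : ℝ) ^ t ≤ Real.exp t * t.factorial := by
  induction t with
  | zero => simp
  | succ t IH =>
    rcases Nat.eq_zero_or_pos t with ht | ht
    · subst ht
      have h := Real.add_one_le_exp (1 : ℝ)
      have h2 : ((0 + 1 : ℕ) : ℝ) ^ (0 + 1) = 1 := by norm_num
      have h3 : (((0 + 1 : ℕ)).factorial : ℝ) = 1 := by norm_num [Nat.factorial]
      rw [h2, h3, mul_one]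
      have h4 : ((0 + 1 : ℕ) : ℝ) = 1 := by norm_num
      rw [h4]
      linarith
    have htR : (0 : ℝ) < t := by exact_mod_cast ht
    have hstep : ((t : ℝ) + 1) ^ t ≤ Real.exp 1 * (t : ℝ) ^ t := by
      have h1 : ((t : ℝ) + 1) = (t : ℝ) * (1 + 1 / t) := by field_simp
      have h2 : (1 + 1 / (t : ℝ)) ^ t ≤ Real.exp 1 := by
        have h3 : (1 : ℝ) + 1 / t ≤ Real.exp (1 / t) := by
          have := Real.add_one_le_exp (1 / (t : ℝ)); linarith
        calc (1 + 1 / (t : ℝ)) ^ t ≤ Real.exp (1 / t) ^ t := by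
              apply pow_le_pow_left₀ (by positivity) h3
          _ = Real.exp ((1 / t) * t) := by rw [← Real.exp_nat_mul]; ring_nf
          _ = Real.exp 1 := by rw [one_div, inv_mul_cancel₀ (ne_of_gt htR)]
      calc ((t : ℝ) + 1) ^ t = (t : ℝ) ^ t * (1 + 1 / t) ^ t := by
            rw [h1, mul_pow]
        _ ≤ (t : ℝ) ^ t * Real.exp 1 := by
            apply mul_le_mul_of_nonneg_left h2 (by positivity)
        _ = Real.exp 1 * (t : ℝ) ^ t := by ring
    have hfact : ((t + 1 : ℕ) : ℝ) * t.factorial = ((t + 1).factorial : ℝ) := by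
      rw [Nat.factorial_succ]; push_cast; ring
    calc ((t + 1 : ℕ) : ℝ) ^ (t + 1) = ((t : ℝ) + 1) ^ t * ((t : ℝ) + 1) := by
          push_cast; rw [pow_succ]
      _ ≤ (Real.exp 1 * (t : ℝ) ^ t) * ((t : ℝ) + 1) := by
          apply mul_le_mul_of_nonneg_right hstep (by positivity)
      _ ≤ (Real.exp 1 * (Real.exp t * t.factorial)) * ((t : ℝ) + 1) := by
          apply mul_le_mul_of_nonneg_right (mul_le_mul_of_nonneg_left IH
            (le_of_lt (Real.exp_pos 1))) (by positivity)
      _ = Real.exp ((t : ℝ) + 1) * (((t + 1 : ℕ) : ℝ) * t.factorial) := by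
          rw [Real.exp_add]; push_cast; ring
      _ = Real.exp ((t + 1 : ℕ) : ℝ) * ((t + 1).factorial : ℝ) := by
          rw [hfact]; norm_num

lemma choose_le_exp_pow {aN t : ℕ} (ht : 1 ≤ t) :
    (aN.choose t : ℝ) * (t : ℝ) ^ t ≤ Real.exp t * (aN : ℝ) ^ t := by
  have h1 : (t.factorial : ℝ) * aN.choose t ≤ (aN : ℝ) ^ t := by
    have := Nat.descFactorial_le_pow aN t
    rw [Nat.descFactorial_eq_factorial_mul_choose] at this
    exact_mod_cast this
  have h2 := pow_le_exp_mul_factorial t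
  have hfpos : (0 : ℝ) < t.factorial := by exact_mod_cast t.factorial_pos
  calc (aN.choose t : ℝ) * (t : ℝ) ^ t ≤ (aN.choose t : ℝ) * (Real.exp t * t.factorial) := by
        apply mul_le_mul_of_nonneg_left h2 (by positivity)
    _ = Real.exp t * ((t.factorial : ℝ) * aN.choose t) := by ring
    _ ≤ Real.exp t * (aN : ℝ) ^ t := by
        apply mul_le_mul_of_nonneg_left h1 (le_of_lt (Real.exp_pos _))

lemma term_pow_bound {aN t L : ℕ} (ht : 1 ≤ t) (hta : t ≤ aN) (htL : 2 * t ≤ L) :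
    (aN : ℝ) ^ t * (t : ℝ) ^ (L - t) ≤ ((aN : ℝ) * L) ^ ((L : ℝ) / 2) := by
  have haN1 : (1 : ℝ) ≤ aN := by exact_mod_cast ht.trans hta
  have ht1 : (1 : ℝ) ≤ t := by exact_mod_cast ht
  have hL1 : (1 : ℝ) ≤ L := by
    have : 1 ≤ L := by omega
    exact_mod_cast this
  have htLR : 2 * (t : ℝ) ≤ L := by exact_mod_cast htL
  have hcast : ((L - t : ℕ) : ℝ) = (L : ℝ) - t := by
    have : t ≤ L := by omega
    push_cast [this]; ring
  have haN0 : (0 : ℝ) < aN := by linarith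
  have ht0 : (0 : ℝ) < t := by linarith
  have hL0 : (0 : ℝ) < L := by linarith
  rw [← Real.rpow_natCast (aN : ℝ) t, ← Real.rpow_natCast (t : ℝ) (L - t), hcast]
  rcases le_total (aN : ℝ) (L : ℝ) with hAL | hLA
  · have h1 : (t : ℝ) ^ ((L : ℝ) - t) ≤ (aN : ℝ) ^ ((L : ℝ) - t) := by
      apply Real.rpow_le_rpow (le_of_lt ht0) (by exact_mod_cast hta) (by linarith)
    calc (aN : ℝ) ^ (t : ℝ) * (t : ℝ) ^ ((L : ℝ) - t)
        ≤ (aN : ℝ) ^ (t : ℝ) * (aN : ℝ) ^ ((L : ℝ) - t) := by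
          apply mul_le_mul_of_nonneg_left h1 (Real.rpow_nonneg (le_of_lt haN0) _)
      _ = (aN : ℝ) ^ (L : ℝ) := by rw [← Real.rpow_add haN0]; ring_nf
      _ = ((aN : ℝ) ^ (2 : ℝ)) ^ ((L : ℝ) / 2) := by
          rw [← Real.rpow_mul (le_of_lt haN0)]; ring_nf
      _ ≤ ((aN : ℝ) * L) ^ ((L : ℝ) / 2) := by
          apply Real.rpow_le_rpow (Real.rpow_nonneg (le_of_lt haN0) _) ?_ (by positivity)
          rw [show (2 : ℝ) = ((2 : ℕ) : ℝ) by norm_num, Real.rpow_natCast]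
          nlinarith
  · have h1 : (t : ℝ) ^ ((L : ℝ) - t) ≤ (L : ℝ) ^ ((L : ℝ) - t) := by
      apply Real.rpow_le_rpow (le_of_lt ht0) (by linarith) (by linarith)
    have key : (aN : ℝ) ^ (t : ℝ) * (L : ℝ) ^ ((L : ℝ) - t)
        ≤ ((aN : ℝ) * L) ^ ((L : ℝ) / 2) := by
      have e1 : (aN : ℝ) ^ (t : ℝ) * (L : ℝ) ^ ((L : ℝ) - t)
          = ((aN : ℝ) * L) ^ (t : ℝ) * (L : ℝ) ^ ((L : ℝ) - 2 * t) := by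
        have e1a : (L : ℝ) ^ ((L : ℝ) - t) = (L : ℝ) ^ (t : ℝ) * (L : ℝ) ^ ((L : ℝ) - 2 * t) := by
          rw [← Real.rpow_add hL0]; ring_nf
        rw [Real.mul_rpow (le_of_lt haN0) (le_of_lt hL0), e1a]
        ring
      have e2 : (L : ℝ) ^ ((L : ℝ) - 2 * t) = ((L : ℝ) ^ (2 : ℝ)) ^ (((L : ℝ) - 2 * t) / 2) := by
        rw [← Real.rpow_mul (le_of_lt hL0)]; ring_nf
      have e3 : ((L : ℝ) ^ (2 : ℝ)) ^ (((L : ℝ) - 2 * t) / 2)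
          ≤ ((aN : ℝ) * L) ^ (((L : ℝ) - 2 * t) / 2) := by
        apply Real.rpow_le_rpow (Real.rpow_nonneg (le_of_lt hL0) _) ?_ (by linarith)
        rw [show (2 : ℝ) = ((2 : ℕ) : ℝ) by norm_num, Real.rpow_natCast]
        nlinarith
      calc (aN : ℝ) ^ (t : ℝ) * (L : ℝ) ^ ((L : ℝ) - t)
          = ((aN : ℝ) * L) ^ (t : ℝ) * (L : ℝ) ^ ((L : ℝ) - 2 * t) := e1
        _ ≤ ((aN : ℝ) * L) ^ (t : ℝ) * ((aN : ℝ) * L) ^ (((L : ℝ) - 2 * t) / 2) := by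
            rw [e2] at *
            apply mul_le_mul_of_nonneg_left e3 (Real.rpow_nonneg (by positivity) _)
        _ = ((aN : ℝ) * L) ^ ((L : ℝ) / 2) := by
            rw [← Real.rpow_add (by positivity)]; ring_nf
    calc (aN : ℝ) ^ (t : ℝ) * (t : ℝ) ^ ((L : ℝ) - t)
        ≤ (aN : ℝ) ^ (t : ℝ) * (L : ℝ) ^ ((L : ℝ) - t) := by
          apply mul_le_mul_of_nonneg_left h1 (Real.rpow_nonneg (le_of_lt haN0) _)
      _ ≤ ((aN : ℝ) * L) ^ ((L : ℝ) / 2) := key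

end Analytic

set_option maxHeartbeats 1000000 in
/-- Lemma 6.5 of the paper: the counting bound `|U| ≤ ((ℓ/n)·e³·α·k⁵)^{ℓ/2} · |V|`. -/
theorem hypermatching_counting_bound (k c a : ℕ) (hk : 2 ≤ k) (hc : 0 < c) (ha : 0 < a)
    (α : ℝ) (hα0 : 0 < α) (hα1 : α < 1 / (100 * (k : ℝ) ^ 2))
    (hαn : (a : ℝ) = α * (k * c))
    (ℓv : Fin k → ℕ) (hL1 : 1 ≤ ∑ j, ℓv j) (hL2 : ∑ j, ℓv j ≤ k * a) :
    ((Uset k c a ℓv).card : ℝ) ≤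
      ((((∑ j, ℓv j : ℕ) : ℝ) / ((k : ℝ) * c)) * Real.exp 1 ^ 3 * α * (k : ℝ) ^ 5) ^
          (((∑ j, ℓv j : ℕ) : ℝ) / 2) *
        ((Vset k c ℓv).card : ℝ) := by
  have hk0 : 0 < k := by omega
  have hkR : (0 : ℝ) < k := by exact_mod_cast hk0
  have hkR1 : (1 : ℝ) ≤ k := by exact_mod_cast hk0
  have hcR : (0 : ℝ) < c := by exact_mod_cast hc
  have haR : (0 : ℝ) < a := by exact_mod_cast ha
  set L := ∑ j, ℓv j with hLdef
  have hL1R : (1 : ℝ) ≤ (L : ℝ) := by exact_mod_cast hL1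
  have hLR0 : (0 : ℝ) < (L : ℝ) := by linarith
  -- a < c
  have hacR : (a : ℝ) < c := by
    have h1 : (a : ℝ) < (1 / (100 * (k : ℝ) ^ 2)) * (k * c) := by
      rw [hαn]
      apply mul_lt_mul_of_pos_right hα1 (by positivity)
    have h2 : (1 / (100 * (k : ℝ) ^ 2)) * (k * c) = c / (100 * k) := by
      field_simp
    rw [h2] at h1
    have h3 : (c : ℝ) / (100 * k) ≤ c / 100 := by
      apply div_le_div_of_nonneg_left (le_of_lt hcR) (by norm_num) (by nlinarith)
    have h4 : (c : ℝ) / 100 ≤ c := by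
      apply div_le_self (le_of_lt hcR) (by norm_num)
    linarith
  have hac : a ≤ c := by
    have : a < c := by exact_mod_cast hacR
    omega
  have halpha : α = (a : ℝ) / ((k : ℝ) * c) := by
    rw [hαn]
    field_simp
  set q : ℝ := (L : ℝ) / 2 with hqdef
  have hq0 : 0 < q := by positivity
  have h2q : 2 * q = (L : ℝ) := by rw [hqdef]; ring
  set m := min a (L / 2) with hmdef
  set P : ℝ := ∏ j, (Nat.choose c (ℓv j) : ℝ) with hPdef
  have hP0 : (0 : ℝ) ≤ P := Finset.prod_nonneg fun j _ => Nat.cast_nonneg _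
  set β : ℝ := ((L : ℕ) : ℝ) / ((k : ℝ) * c) * Real.exp 1 ^ 3 * α * (k : ℝ) ^ 5 with hβdef
  have hβ0 : 0 ≤ β := by
    rw [hβdef]
    have he : (0:ℝ) < Real.exp 1 ^ 3 := by positivity
    positivity
  have hcL : (0 : ℝ) < (c : ℝ) ^ L := by positivity
  -- step 1 : counting
  have step1 : ((Uset k c a ℓv).card : ℝ) ≤
      ∑ t ∈ Finset.Icc 1 m, (a.choose t : ℝ) * ∏ j, ((t.choose (ℓv j) : ℕ) : ℝ) := by
    have h := Uset_card_le_sum hk hc ha hac ℓv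
    calc ((Uset k c a ℓv).card : ℝ)
        ≤ ((∑ t ∈ Finset.Icc 1 m, a.choose t * ∏ j, t.choose (ℓv j) : ℕ) : ℝ) := by
          exact_mod_cast h
      _ = ∑ t ∈ Finset.Icc 1 m, (a.choose t : ℝ) * ∏ j, ((t.choose (ℓv j) : ℕ) : ℝ) := by
          push_cast
          rfl
  -- step 2 : per-term bound, multiplied by c^L
  have step2 : ∀ t ∈ Finset.Icc 1 m,
      ((a.choose t : ℝ) * ∏ j, ((t.choose (ℓv j) : ℕ) : ℝ)) * (c : ℝ) ^ L ≤
        Real.exp q * ((a : ℝ) * L) ^ q * P := by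
    intro t ht
    rw [Finset.mem_Icc] at ht
    obtain ⟨ht1, htm⟩ := ht
    have hta : t ≤ a := le_trans htm (min_le_left _ _)
    have htL2 : t ≤ L / 2 := le_trans htm (min_le_right _ _)
    have htL : 2 * t ≤ L := by omega
    have htc : t ≤ c := le_trans hta hac
    have ht0R : (0 : ℝ) < t := by exact_mod_cast ht1
    -- product ratio bound (natural numbers)
    have hA : (∏ j, t.choose (ℓv j)) * c ^ L ≤ (∏ j, c.choose (ℓv j)) * t ^ L := by
      calc (∏ j, t.choose (ℓv j)) * c ^ L
          = ∏ j, (t.choose (ℓv j) * c ^ (ℓv j)) := by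
            rw [Finset.prod_mul_distrib, Finset.prod_pow_eq_pow_sum]
        _ ≤ ∏ j, (c.choose (ℓv j) * t ^ (ℓv j)) :=
            Finset.prod_le_prod' fun j _ => choose_ratio htc (ℓv j)
        _ = (∏ j, c.choose (ℓv j)) * t ^ L := by
            rw [Finset.prod_mul_distrib, Finset.prod_pow_eq_pow_sum]
    have hAR : (∏ j, ((t.choose (ℓv j) : ℕ) : ℝ)) * (c : ℝ) ^ L ≤ P * (t : ℝ) ^ L := by
      rw [hPdef]
      exact_mod_cast hA
    have hsplit : (t : ℝ) ^ L = (t : ℝ) ^ t * (t : ℝ) ^ (L - t) := by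
      rw [← pow_add]
      congr 1
      omega
    have hch := choose_le_exp_pow (aN := a) ht1
    have hterm := term_pow_bound (aN := a) ht1 hta htL
    have hexp : Real.exp t ≤ Real.exp q := by
      apply Real.exp_le_exp.mpr
      rw [hqdef, le_div_iff₀ (by norm_num : (0:ℝ) < 2)]
      have h2 : t * 2 ≤ L := by omega
      exact_mod_cast h2
    calc ((a.choose t : ℝ) * ∏ j, ((t.choose (ℓv j) : ℕ) : ℝ)) * (c : ℝ) ^ L
        = (a.choose t : ℝ) * ((∏ j, ((t.choose (ℓv j) : ℕ) : ℝ)) * (c : ℝ) ^ L) := by ring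
      _ ≤ (a.choose t : ℝ) * (P * (t : ℝ) ^ L) := by
          apply mul_le_mul_of_nonneg_left hAR (Nat.cast_nonneg _)
      _ = ((a.choose t : ℝ) * (t : ℝ) ^ t) * ((t : ℝ) ^ (L - t) * P) := by
          rw [hsplit]; ring
      _ ≤ (Real.exp t * (a : ℝ) ^ t) * ((t : ℝ) ^ (L - t) * P) := by
          apply mul_le_mul_of_nonneg_right hch (by positivity)
      _ = (Real.exp t) * ((a : ℝ) ^ t * (t : ℝ) ^ (L - t)) * P := by ring
      _ ≤ Real.exp q * ((a : ℝ) * L) ^ q * P := by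
          have h1 : (Real.exp t) * ((a : ℝ) ^ t * (t : ℝ) ^ (L - t)) ≤
              Real.exp q * ((a : ℝ) * L) ^ q :=
            mul_le_mul hexp hterm (by positivity) (le_of_lt (Real.exp_pos _))
          apply mul_le_mul_of_nonneg_right h1 hP0
  -- sum bound
  have step3 : (∑ t ∈ Finset.Icc 1 m, (a.choose t : ℝ) * ∏ j, ((t.choose (ℓv j) : ℕ) : ℝ))
      * (c : ℝ) ^ L ≤ (L : ℝ) * (Real.exp q * ((a : ℝ) * L) ^ q * P) := by
    rw [Finset.sum_mul]
    calc (∑ t ∈ Finset.Icc 1 m,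
          ((a.choose t : ℝ) * ∏ j, ((t.choose (ℓv j) : ℕ) : ℝ)) * (c : ℝ) ^ L)
        ≤ (Finset.Icc 1 m).card • (Real.exp q * ((a : ℝ) * L) ^ q * P) :=
          Finset.sum_le_card_nsmul _ _ _ step2
      _ = ((Finset.Icc 1 m).card : ℝ) * (Real.exp q * ((a : ℝ) * L) ^ q * P) := by
          rw [nsmul_eq_mul]
      _ ≤ (L : ℝ) * (Real.exp q * ((a : ℝ) * L) ^ q * P) := by
          apply mul_le_mul_of_nonneg_right _ (by positivity)
          rw [Nat.card_Icc]
          have : m + 1 - 1 ≤ L := by omega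
          exact_mod_cast this
  -- the right-hand side, multiplied by c^L
  have hV : P ≤ ((Vset k c ℓv).card : ℝ) := by
    have := prod_choose_le_Vset_card hk0 hc ℓv
    rw [hPdef]
    exact_mod_cast this
  have hcc : ((c : ℝ) ^ 2) ^ q = (c : ℝ) ^ L := by
    have h1 : ((c : ℝ) ^ 2) ^ q = (c : ℝ) ^ ((2 : ℝ) * q) := by
      rw [← Real.rpow_natCast (c : ℝ) 2, ← Real.rpow_mul (le_of_lt hcR)]
      norm_num
    rw [h1, h2q, Real.rpow_natCast]
  have hβc2 : β * (c : ℝ) ^ 2 = Real.exp 1 ^ 3 * (((a : ℝ) * L) * (k : ℝ) ^ 3) := by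
    rw [hβdef, halpha]
    have hkne : (k : ℝ) ≠ 0 := ne_of_gt hkR
    have hcne : (c : ℝ) ≠ 0 := ne_of_gt hcR
    field_simp
  have hβcL : β ^ q * (c : ℝ) ^ L =
      (Real.exp q * Real.exp (2 * q)) * (((a : ℝ) * L) ^ q * ((k : ℝ) ^ 3) ^ q) := by
    have h1 : β ^ q * (c : ℝ) ^ L = (β * (c : ℝ) ^ 2) ^ q := by
      rw [Real.mul_rpow hβ0 (by positivity), hcc]
    rw [h1, hβc2]
    have hE : (Real.exp 1 ^ 3 : ℝ) = Real.exp 1 ^ (3 : ℝ) := by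
      rw [← Real.rpow_natCast (Real.exp 1) 3]
      norm_num
    have hX0 : (0 : ℝ) ≤ ((a : ℝ) * L) * (k : ℝ) ^ 3 := by positivity
    have hE0 : (0 : ℝ) ≤ Real.exp 1 ^ 3 := by positivity
    have haL0 : (0 : ℝ) ≤ (a : ℝ) * L := by positivity
    have hk30 : (0 : ℝ) ≤ (k : ℝ) ^ 3 := by positivity
    rw [Real.mul_rpow hE0 hX0, Real.mul_rpow haL0 hk30, hE,
      ← Real.rpow_mul (le_of_lt (Real.exp_pos 1)), Real.exp_one_rpow,
      show (3 : ℝ) * q = q + 2 * q by ring, Real.exp_add]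
  -- compare
  have hk3q : (1 : ℝ) ≤ ((k : ℝ) ^ 3) ^ q := by
    have h1 : (1 : ℝ) ≤ (k : ℝ) ^ 3 := by nlinarith
    calc (1 : ℝ) = (1 : ℝ) ^ q := (Real.one_rpow q).symm
      _ ≤ ((k : ℝ) ^ 3) ^ q := Real.rpow_le_rpow (by norm_num) h1 (le_of_lt hq0)
  have hLle : (L : ℝ) ≤ Real.exp (2 * q) * ((k : ℝ) ^ 3) ^ q := by
    have h1 : (L : ℝ) ≤ Real.exp (2 * q) := by
      rw [h2q]
      have := Real.add_one_le_exp ((L : ℝ))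
      linarith
    calc (L : ℝ) ≤ Real.exp (2 * q) := h1
      _ = Real.exp (2 * q) * 1 := by ring
      _ ≤ Real.exp (2 * q) * ((k : ℝ) ^ 3) ^ q := by
          apply mul_le_mul_of_nonneg_left hk3q (le_of_lt (Real.exp_pos _))
  have step4 : (L : ℝ) * (Real.exp q * ((a : ℝ) * L) ^ q * P) ≤
      (β ^ q * ((Vset k c ℓv).card : ℝ)) * (c : ℝ) ^ L := by
    have hre : (β ^ q * ((Vset k c ℓv).card : ℝ)) * (c : ℝ) ^ L =
        (Real.exp (2 * q) * ((k : ℝ) ^ 3) ^ q) *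
          (Real.exp q * ((a : ℝ) * L) ^ q * ((Vset k c ℓv).card : ℝ)) := by
      calc (β ^ q * ((Vset k c ℓv).card : ℝ)) * (c : ℝ) ^ L
          = (β ^ q * (c : ℝ) ^ L) * ((Vset k c ℓv).card : ℝ) := by ring
        _ = (Real.exp (2 * q) * ((k : ℝ) ^ 3) ^ q) *
            (Real.exp q * ((a : ℝ) * L) ^ q * ((Vset k c ℓv).card : ℝ)) := by
            rw [hβcL]; ring
    rw [hre]
    have hmid : Real.exp q * ((a : ℝ) * L) ^ q * P ≤
        Real.exp q * ((a : ℝ) * L) ^ q * ((Vset k c ℓv).card : ℝ) :=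
      mul_le_mul_of_nonneg_left hV (by positivity)
    calc (L : ℝ) * (Real.exp q * ((a : ℝ) * L) ^ q * P)
        ≤ (L : ℝ) * (Real.exp q * ((a : ℝ) * L) ^ q * ((Vset k c ℓv).card : ℝ)) :=
          mul_le_mul_of_nonneg_left hmid (by positivity)
      _ ≤ (Real.exp (2 * q) * ((k : ℝ) ^ 3) ^ q) *
          (Real.exp q * ((a : ℝ) * L) ^ q * ((Vset k c ℓv).card : ℝ)) :=
          mul_le_mul_of_nonneg_right hLle (mul_nonneg (mul_nonneg (le_of_lt (Real.exp_pos q))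
            (Real.rpow_nonneg (mul_nonneg (Nat.cast_nonneg _) (Nat.cast_nonneg _)) q))
            (Nat.cast_nonneg _))
  -- final cancellation
  have final : ((Uset k c a ℓv).card : ℝ) * (c : ℝ) ^ L ≤
      (β ^ q * ((Vset k c ℓv).card : ℝ)) * (c : ℝ) ^ L := by
    calc ((Uset k c a ℓv).card : ℝ) * (c : ℝ) ^ L
        ≤ (∑ t ∈ Finset.Icc 1 m, (a.choose t : ℝ) * ∏ j, ((t.choose (ℓv j) : ℕ) : ℝ))
            * (c : ℝ) ^ L := mul_le_mul_of_nonneg_right step1 (le_of_lt hcL)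
      _ ≤ (L : ℝ) * (Real.exp q * ((a : ℝ) * L) ^ q * P) := step3
      _ ≤ (β ^ q * ((Vset k c ℓv).card : ℝ)) * (c : ℝ) ^ L := step4
  exact le_of_mul_le_mul_right final hcL
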